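/- Let (R_i, f_i) for i ∈ ℕ be an inverse system of rings where each connecting homomorphism f_i : R_{i+1} → R_i is surjective and each R_i is von Neumann regular. Then the inverse limit ring lim← R_i = {(x_i) ∈ ∏ R_i : f_i(x_{i+1}) = x_i for all i} is von Neumann regular. -/
import Mathlib


/-- The inverse limit of an inverse system of rings `(Rᵢ, fᵢ)` indexed by `ℕ`, realized as
the subring of compatible sequences in the product. -/
def ringInverseLimit (R : ℕ → Type*) [∀ i, Ring (R i)]
    (f : ∀ i, R (i + 1) →+* R i) : Subring (∀ i, R i) where
  carrier := {x | ∀ i, f i (x (i + 1)) = x i}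
  zero_mem' := by intro i; simp
  one_mem' := by intro i; simp
  add_mem' := by intro x y hx hy i; simp [map_add, hx i, hy i]
  mul_mem' := by intro x y hx hy i; simp [map_mul, hx i, hy i]
  neg_mem' := by intro x hx i; simp [map_neg, hx i]

/-- Lifting lemma: a quasi-inverse downstairs lifts to a quasi-inverse upstairs. -/
lemma liftQI {S T : Type*} [Ring S] [Ring T] (f : S →+* T) (hf : Function.Surjective f)
    (a d : S) (hd : a * d * a = a) (b : T) (hb : f a * b * f a = f a) :
    ∃ b' : S, a * b' * a = a ∧ f b' = b := by
  obtain ⟨y, hy⟩ := hf (b - f d)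
  refine ⟨d + y - d * a * y * a * d, ?_, ?_⟩
  · have key : a * (d * a * y * a * d) * a = a * y * a := by
      calc a * (d * a * y * a * d) * a = (a * d * a) * y * (a * d * a) := by noncomm_ring
        _ = a * y * a := by rw [hd]
    calc a * (d + y - d * a * y * a * d) * a
        = a * d * a + a * y * a - a * (d * a * y * a * d) * a := by noncomm_ring
      _ = a := by rw [key, hd]; abel
  · have hd' : f a * f d * f a = f a := by
      rw [← map_mul, ← map_mul, hd]
    have key : f d * f a * (b - f d) * f a * f d = 0 := by
      have h1 : f d * f a * b * f a * f d = f d * f a * f d := by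
        calc f d * f a * b * f a * f d = f d * (f a * b * f a) * f d := by noncomm_ring
          _ = f d * f a * f d := by rw [hb]
      have h2 : f d * f a * f d * f a * f d = f d * f a * f d := by
        calc f d * f a * f d * f a * f d = f d * (f a * f d * f a) * f d := by noncomm_ring
          _ = f d * f a * f d := by rw [hd']
      calc f d * f a * (b - f d) * f a * f d
          = f d * f a * b * f a * f d - f d * f a * f d * f a * f d := by noncomm_ring
        _ = 0 := by rw [h1, h2]; abel
    have expand : f (d + y - d * a * y * a * d)
        = f d + f y - f d * f a * f y * f a * f d := by
      simp [map_add, map_sub, map_mul, mul_assoc]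
    rw [expand, hy, key]
    abel

/-- Recursively constructed compatible sequence of quasi-inverses. -/
noncomputable def seqAux (R : ℕ → Type*) [∀ i, Ring (R i)] (f : ∀ i, R (i + 1) →+* R i)
    (hsurj : ∀ i, Function.Surjective (f i))
    (hreg : ∀ i, ∀ a : R i, ∃ b : R i, a * b * a = a)
    (a : ∀ i, R i) (ha : ∀ i, f i (a (i + 1)) = a i) :
    ∀ i, {x : R i // a i * x * a i = a i}
  | 0 => ⟨(hreg 0 (a 0)).choose, (hreg 0 (a 0)).choose_spec⟩
  | (i + 1) =>
    let prev := seqAux R f hsurj hreg a ha i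
    let h := liftQI (f i) (hsurj i) (a (i + 1)) (hreg (i + 1) (a (i + 1))).choose
      (hreg (i + 1) (a (i + 1))).choose_spec prev.1
      (by rw [ha i]; exact prev.2)
    ⟨h.choose, h.choose_spec.1⟩

lemma seqAux_compat (R : ℕ → Type*) [∀ i, Ring (R i)] (f : ∀ i, R (i + 1) →+* R i)
    (hsurj : ∀ i, Function.Surjective (f i))
    (hreg : ∀ i, ∀ a : R i, ∃ b : R i, a * b * a = a)
    (a : ∀ i, R i) (ha : ∀ i, f i (a (i + 1)) = a i) (i : ℕ) :
    f i (seqAux R f hsurj hreg a ha (i + 1)).1 = (seqAux R f hsurj hreg a ha i).1 :=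
  (liftQI (f i) (hsurj i) (a (i + 1)) (hreg (i + 1) (a (i + 1))).choose
      (hreg (i + 1) (a (i + 1))).choose_spec (seqAux R f hsurj hreg a ha i).1
      (by rw [ha i]; exact (seqAux R f hsurj hreg a ha i).2)).choose_spec.2

/-- An inverse limit of von Neumann regular rings along surjective connecting
homomorphisms is von Neumann regular. -/
theorem stmt_5 (R : ℕ → Type*) [∀ i, Ring (R i)] (f : ∀ i, R (i + 1) →+* R i)
    (hsurj : ∀ i, Function.Surjective (f i))
    (hreg : ∀ i, ∀ a : R i, ∃ b : R i, a * b * a = a) :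
    ∀ a : ringInverseLimit R f, ∃ b : ringInverseLimit R f, a * b * a = a := by
  rintro ⟨a, ha⟩
  refine ⟨⟨fun i => (seqAux R f hsurj hreg a ha i).1,
    fun i => seqAux_compat R f hsurj hreg a ha i⟩, ?_⟩
  ext i
  exact (seqAux R f hsurj hreg a ha i).2
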